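/- Define f : [0,1] → ℝ by f(x) = x · E[log(1 + Binomial(d, x))] = x · ∑_{k=0}^d log(1+k)·C(d,k)·x^k·(1−x)^{d−k}, for a fixed natural number d ≥ 1. Then f is convex on [0,1]. -/

import Mathlib

open Polynomial Finset

private lemma bern_deriv_sum (k : ℕ) (hk : 1 ≤ k) (c : ℕ → ℝ) :
    Polynomial.derivative (∑ j ∈ Finset.range (k + 1),
        Polynomial.C (c j) * bernsteinPolynomial ℝ k j) =
      ((k : ℕ) : Polynomial ℝ) *
        ∑ i ∈ Finset.range k,
          Polynomial.C (c (i + 1) - c i) * bernsteinPolynomial ℝ (k - 1) i := by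
  obtain ⟨m, rfl⟩ : ∃ m, k = m + 1 := ⟨k - 1, (Nat.succ_pred_eq_of_pos hk).symm⟩
  rw [show m + 1 - 1 = m from rfl]
  set B : ℕ → Polynomial ℝ := fun i => bernsteinPolynomial ℝ m i with hB
  have hshift : ∑ i ∈ Finset.range (m + 1), Polynomial.C (c (i + 1)) * B (i + 1)
      = ∑ i ∈ Finset.range (m + 1), Polynomial.C (c i) * B i - Polynomial.C (c 0) * B 0 := by
    have h0 := Finset.sum_range_succ' (fun j => Polynomial.C (c j) * B j) (m + 1)
    have h1 := Finset.sum_range_succ (fun j => Polynomial.C (c j) * B j) (m + 1)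
    have hz : B (m + 1) = 0 := bernsteinPolynomial.eq_zero_of_lt ℝ (Nat.lt_succ_self m)
    rw [hz, mul_zero, add_zero] at h1
    linear_combination h1 - h0
  rw [Polynomial.derivative_sum]
  rw [Finset.sum_congr rfl (fun j _ => Polynomial.derivative_C_mul (c j)
    (bernsteinPolynomial ℝ (m + 1) j))]
  rw [Finset.sum_range_succ' (fun j => Polynomial.C (c j) *
    Polynomial.derivative (bernsteinPolynomial ℝ (m + 1) j)) (m + 1)]
  have hsucc : ∀ i, Polynomial.derivative (bernsteinPolynomial ℝ (m + 1) (i + 1))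
      = ((m + 1 : ℕ) : Polynomial ℝ) * (B i - B (i + 1)) := by
    intro i
    rw [bernsteinPolynomial.derivative_succ]
    simp [hB]
  have hzero : Polynomial.derivative (bernsteinPolynomial ℝ (m + 1) 0)
      = -((m + 1 : ℕ) : Polynomial ℝ) * B 0 := by
    rw [bernsteinPolynomial.derivative_zero]
    simp [hB]
  rw [Finset.sum_congr rfl (fun i _ => by rw [hsucc i]), hzero]
  have expand : ∀ i, Polynomial.C (c (i + 1)) * (((m + 1 : ℕ) : Polynomial ℝ) * (B i - B (i + 1)))
      = ((m + 1 : ℕ) : Polynomial ℝ) * (Polynomial.C (c (i + 1)) * B i)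
        - ((m + 1 : ℕ) : Polynomial ℝ) * (Polynomial.C (c (i + 1)) * B (i + 1)) := fun i => by ring
  rw [Finset.sum_congr rfl (fun i _ => expand i), Finset.sum_sub_distrib,
    ← Finset.mul_sum, ← Finset.mul_sum, hshift]
  have hR : ∑ i ∈ Finset.range (m + 1), Polynomial.C (c (i + 1) - c i) * B i
      = ∑ i ∈ Finset.range (m + 1), Polynomial.C (c (i + 1)) * B i
        - ∑ i ∈ Finset.range (m + 1), Polynomial.C (c i) * B i := by
    rw [← Finset.sum_sub_distrib]
    exact Finset.sum_congr rfl fun i _ => by rw [Polynomial.C_sub]; ring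
  rw [hR]
  ring

private lemma hfun_nonneg (i : ℕ) :
    0 ≤ ((i : ℝ) + 2) * Real.log ((i : ℝ) + 2) + (i : ℝ) * Real.log i
      - 2 * (((i : ℝ) + 1) * Real.log ((i : ℝ) + 1)) := by
  have hc := Real.convexOn_mul_log.2 (Set.mem_Ici.mpr (by positivity : (0:ℝ) ≤ (i : ℝ)))
    (Set.mem_Ici.mpr (by positivity : (0:ℝ) ≤ (i : ℝ) + 2))
    (by norm_num : (0:ℝ) ≤ 1/2) (by norm_num : (0:ℝ) ≤ 1/2) (by norm_num)
  simp only [smul_eq_mul] at hc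
  have h2 : (1/2 : ℝ) * (i : ℝ) + (1/2) * ((i : ℝ) + 2) = (i : ℝ) + 1 := by ring
  rw [h2] at hc
  nlinarith [hc]

theorem discObjective_convexOn (d : ℕ) (hd : 1 ≤ d) :
    ConvexOn ℝ (Set.Icc (0 : ℝ) 1)
      (fun x : ℝ => x * ∑ k ∈ Finset.range (d + 1),
        Real.log (1 + (k : ℝ)) * (d.choose k : ℝ) * x ^ k * (1 - x) ^ (d - k)) := by
  set n := d + 1 with hnd
  set c : ℕ → ℝ := fun j => (j : ℝ) * Real.log j / (n : ℝ) with hc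
  set P : Polynomial ℝ := ∑ j ∈ Finset.range (n + 1),
    Polynomial.C (c j) * bernsteinPolynomial ℝ n j with hP
  -- f = eval of P
  have hfP : (fun x : ℝ => x * ∑ k ∈ Finset.range n,
      Real.log (1 + (k : ℝ)) * (d.choose k : ℝ) * x ^ k * (1 - x) ^ (d - k))
      = fun x : ℝ => P.eval x := by
    funext x
    rw [hP, Polynomial.eval_finset_sum]
    rw [Finset.sum_range_succ' (fun j => Polynomial.eval x (Polynomial.C (c j) *
      bernsteinPolynomial ℝ n j)) n]
    have h0 : Polynomial.eval x (Polynomial.C (c 0) * bernsteinPolynomial ℝ n 0) = 0 := by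
      simp [hc]
    rw [h0, add_zero, Finset.mul_sum]
    refine Finset.sum_congr rfl fun k hk => ?_
    have hcoef : c (k + 1) * ((n.choose (k + 1) : ℕ) : ℝ)
        = Real.log (1 + (k : ℝ)) * (d.choose k : ℝ) := by
      have hnat : (n.choose (k + 1)) * (k + 1) = n * d.choose k := by
        rw [hnd, ← Nat.add_one_mul_choose_eq]
      have hnatR : ((n.choose (k + 1) : ℕ) : ℝ) * ((k : ℝ) + 1) = (n : ℝ) * (d.choose k : ℝ) := by
        exact_mod_cast congrArg (fun t : ℕ => (t : ℝ)) hnat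
      have hn0 : (n : ℝ) ≠ 0 := by positivity
      rw [hc]
      push_cast
      rw [add_comm (1 : ℝ) (k : ℝ)]
      field_simp
      have hnR : ((n:ℕ):ℝ) = (d:ℝ) + 1 := by rw [hnd]; push_cast; ring
      rw [hnR] at hnatR
      linear_combination Real.log ((k:ℝ)+1) * hnatR - Real.log ((k:ℝ)+1) * (d.choose k : ℝ) * hnR
    simp only [bernsteinPolynomial, Polynomial.eval_mul, Polynomial.eval_C,
      Polynomial.eval_pow, Polynomial.eval_natCast, Polynomial.eval_sub, Polynomial.eval_one,
      Polynomial.eval_X]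
    rw [show n - (k + 1) = d - k from by omega]
    rw [← hcoef]
    ring
  rw [hfP]
  -- second derivative formula
  have hder1 : Polynomial.derivative P = ((n : ℕ) : Polynomial ℝ) *
      ∑ i ∈ Finset.range n, Polynomial.C (c (i + 1) - c i) * bernsteinPolynomial ℝ (n - 1) i := by
    rw [hP]; exact bern_deriv_sum n (by omega) c
  have hn1 : 1 ≤ n - 1 := by omega
  have hder2 : Polynomial.derivative (Polynomial.derivative P)
      = ((n : ℕ) : Polynomial ℝ) * (((n - 1 : ℕ) : Polynomial ℝ) *
        ∑ i ∈ Finset.range (n - 1), Polynomial.C ((c (i + 2) - c (i + 1)) - (c (i + 1) - c i)) *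
          bernsteinPolynomial ℝ (n - 1 - 1) i) := by
    rw [hder1, Polynomial.derivative_mul]
    rw [Polynomial.derivative_natCast, zero_mul, zero_add]
    congr 1
    have := bern_deriv_sum (n - 1) hn1 (fun i => c (i + 1) - c i)
    rw [show n - 1 + 1 = n from by omega] at this
    exact this
  -- nonnegativity of second derivative on [0,1]
  have hnn : ∀ x ∈ Set.Icc (0:ℝ) 1,
      0 ≤ (Polynomial.derivative (Polynomial.derivative P)).eval x := by
    intro x hx
    obtain ⟨hx0, hx1⟩ := hx
    rw [hder2]
    simp only [Polynomial.eval_mul, Polynomial.eval_natCast, Polynomial.eval_finset_sum]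
    have hterm : ∀ i ∈ Finset.range (n - 1), 0 ≤ Polynomial.eval x
        (Polynomial.C ((c (i + 2) - c (i + 1)) - (c (i + 1) - c i)))
        * Polynomial.eval x (bernsteinPolynomial ℝ (n - 1 - 1) i) := by
      intro i _
      rw [Polynomial.eval_C]
      have hn0 : (0:ℝ) < (n : ℝ) := by positivity
      have hcnn : 0 ≤ (c (i + 2) - c (i + 1)) - (c (i + 1) - c i) := by
        have h := hfun_nonneg i
        have hrw : (c (i + 2) - c (i + 1)) - (c (i + 1) - c i)
            = (((i:ℝ) + 2) * Real.log ((i:ℝ) + 2) + (i:ℝ) * Real.log i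
              - 2 * (((i:ℝ) + 1) * Real.log ((i:ℝ) + 1))) / (n : ℝ) := by
          rw [hc]
          push_cast
          ring
        rw [hrw]
        exact div_nonneg h hn0.le
      have hbnn : 0 ≤ Polynomial.eval x (bernsteinPolynomial ℝ (n - 1 - 1) i) := by
        simp only [bernsteinPolynomial, Polynomial.eval_mul, Polynomial.eval_pow,
          Polynomial.eval_natCast, Polynomial.eval_sub, Polynomial.eval_one, Polynomial.eval_X]
        have h1x : (0:ℝ) ≤ 1 - x := by linarith
        positivity
      exact mul_nonneg hcnn hbnn
    exact mul_nonneg (by positivity) (mul_nonneg (by positivity) (Finset.sum_nonneg hterm))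
  -- conclude
  apply convexOn_of_deriv2_nonneg (convex_Icc 0 1)
  · exact P.continuousOn
  · exact P.differentiable.differentiableOn
  · have hd1 : deriv (fun x : ℝ => P.eval x) = fun y => (Polynomial.derivative P).eval y := by
      funext y; exact Polynomial.deriv P
    rw [hd1]
    exact (Polynomial.derivative P).differentiable.differentiableOn
  · intro x hx
    have hx' : x ∈ Set.Icc (0:ℝ) 1 := interior_subset hx
    have h2 : deriv^[2] (fun x : ℝ => P.eval x) x
        = (Polynomial.derivative (Polynomial.derivative P)).eval x := by
      have h1 : deriv (fun x : ℝ => P.eval x) = fun y => (Polynomial.derivative P).eval y := by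
        funext y; exact Polynomial.deriv P
      simp only [Function.iterate_succ, Function.iterate_zero, Function.comp_apply, id_eq]
      rw [h1]
      exact Polynomial.deriv (Polynomial.derivative P)
    rw [h2]
    exact hnn x hx'
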